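/- Let A and H be coassociative coalgebras equipped with a cycle cross coproduct system: linear maps φ: A→H⊗A, ψ: A→A⊗H, ρ: H→A⊗H, γ: H→H⊗A, P: A→H⊗H, Q: H→A⊗A satisfying the cycle conditions (CC3), (CC4), (CC7), (CC8) and (CCP1)–(CCP12). Then D = A^P # ^Q H, the vector space A ⊕ H with comultiplication Δ_E(a) = Δ_A(a) + φ(a) + ψ(a) + P(a) and Δ_E(x) = Δ_H(x) + ρ(x) + γ(x) + Q(x), is a coassociative coalgebra. -/

import Mathlib

open TensorProduct BigOperators


section CCCAux
variable {k : Type*} [Field k] {M N P Q S : Type*}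
  [AddCommGroup M] [Module k M] [AddCommGroup N] [Module k N]
  [AddCommGroup P] [Module k P] [AddCommGroup Q] [Module k Q]
  [AddCommGroup S] [Module k S]

lemma rT_map (h : N →ₗ[k] S) (f : M →ₗ[k] N) (g : P →ₗ[k] Q) (t : M ⊗[k] P) :
    LinearMap.rTensor Q h (TensorProduct.map f g t) = TensorProduct.map (h ∘ₗ f) g t := by
  have : LinearMap.rTensor Q h ∘ₗ TensorProduct.map f g = TensorProduct.map (h ∘ₗ f) g := by
    ext m p; simp
  exact DFunLike.congr_fun this t

lemma lT_map (h : Q →ₗ[k] S) (f : M →ₗ[k] N) (g : P →ₗ[k] Q) (t : M ⊗[k] P) :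
    LinearMap.lTensor N h (TensorProduct.map f g t) = TensorProduct.map f (h ∘ₗ g) t := by
  have : LinearMap.lTensor N h ∘ₗ TensorProduct.map f g = TensorProduct.map f (h ∘ₗ g) := by
    ext m p; simp
  exact DFunLike.congr_fun this t

lemma mp_left (F : N →ₗ[k] S) (θ : M →ₗ[k] N) (G : P →ₗ[k] Q) (t : M ⊗[k] P) :
    TensorProduct.map (F ∘ₗ θ) G t = TensorProduct.map F G (LinearMap.rTensor P θ t) := by
  have : TensorProduct.map (F ∘ₗ θ) G = TensorProduct.map F G ∘ₗ LinearMap.rTensor P θ := by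
    ext m p; simp
  rw [this]; rfl

lemma mp_right (F : M →ₗ[k] N) (G : Q →ₗ[k] S) (θ : P →ₗ[k] Q) (t : M ⊗[k] P) :
    TensorProduct.map F (G ∘ₗ θ) t = TensorProduct.map F G (LinearMap.lTensor M θ t) := by
  have : TensorProduct.map F (G ∘ₗ θ) = TensorProduct.map F G ∘ₗ LinearMap.lTensor M θ := by
    ext m p; simp
  rw [this]; rfl

lemma assoc_nat {X Y Z X' Y' Z' : Type*}
    [AddCommGroup X] [Module k X] [AddCommGroup Y] [Module k Y] [AddCommGroup Z] [Module k Z]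
    [AddCommGroup X'] [Module k X'] [AddCommGroup Y'] [Module k Y'] [AddCommGroup Z'] [Module k Z']
    (f : X →ₗ[k] X') (g : Y →ₗ[k] Y') (h : Z →ₗ[k] Z') (t : (X ⊗[k] Y) ⊗[k] Z) :
    (TensorProduct.assoc k X' Y' Z') (TensorProduct.map (TensorProduct.map f g) h t)
      = TensorProduct.map f (TensorProduct.map g h) ((TensorProduct.assoc k X Y Z) t) := by
  have : (TensorProduct.assoc k X' Y' Z').toLinearMap ∘ₗ
      TensorProduct.map (TensorProduct.map f g) h
      = TensorProduct.map f (TensorProduct.map g h) ∘ₗ (TensorProduct.assoc k X Y Z).toLinearMap := by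
    apply TensorProduct.ext_threefold; intros; simp
  exact DFunLike.congr_fun this t
lemma rcancelAux {G : Type*} [AddCommGroup G] : IsRightCancelAdd G := inferInstance
end CCCAux

/-- The cycle cross coproduct comultiplication on `A ⊕ H`:
`Δ_E(a) = Δ_A(a) + φ(a) + ψ(a) + P(a)`, `Δ_E(x) = Δ_H(x) + ρ(x) + γ(x) + Q(x)`. -/
noncomputable def cycleCrossComul {k A H : Type*} [Field k]
    [AddCommGroup A] [Module k A] [AddCommGroup H] [Module k H]
    (dA : A →ₗ[k] A ⊗[k] A) (dH : H →ₗ[k] H ⊗[k] H)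
    (φ : A →ₗ[k] H ⊗[k] A) (ψ : A →ₗ[k] A ⊗[k] H)
    (ρ : H →ₗ[k] A ⊗[k] H) (γ : H →ₗ[k] H ⊗[k] A)
    (P : A →ₗ[k] H ⊗[k] H) (Q : H →ₗ[k] A ⊗[k] A) :
    (A × H) →ₗ[k] (A × H) ⊗[k] (A × H) :=
  (TensorProduct.map (LinearMap.inl k A H) (LinearMap.inl k A H)).comp
      (dA.comp (LinearMap.fst k A H))
    + (TensorProduct.map (LinearMap.inr k A H) (LinearMap.inl k A H)).comp
      (φ.comp (LinearMap.fst k A H))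
    + (TensorProduct.map (LinearMap.inl k A H) (LinearMap.inr k A H)).comp
      (ψ.comp (LinearMap.fst k A H))
    + (TensorProduct.map (LinearMap.inr k A H) (LinearMap.inr k A H)).comp
      (P.comp (LinearMap.fst k A H))
    + (TensorProduct.map (LinearMap.inr k A H) (LinearMap.inr k A H)).comp
      (dH.comp (LinearMap.snd k A H))
    + (TensorProduct.map (LinearMap.inl k A H) (LinearMap.inr k A H)).comp
      (ρ.comp (LinearMap.snd k A H))
    + (TensorProduct.map (LinearMap.inr k A H) (LinearMap.inl k A H)).comp
      (γ.comp (LinearMap.snd k A H))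
    + (TensorProduct.map (LinearMap.inl k A H) (LinearMap.inl k A H)).comp
      (Q.comp (LinearMap.snd k A H))

set_option maxHeartbeats 2000000 in
/-- Given a cycle cross coproduct system (conditions (CC3), (CC4), (CC7), (CC8) and
(CCP1)–(CCP12)), `D = A^P # ^Q H` is a coassociative coalgebra. -/
theorem stmt9 {k A H : Type*} [Field k]
    [AddCommGroup A] [Module k A] [AddCommGroup H] [Module k H]
    (dA : A →ₗ[k] A ⊗[k] A) (dH : H →ₗ[k] H ⊗[k] H)
    (φ : A →ₗ[k] H ⊗[k] A) (ψ : A →ₗ[k] A ⊗[k] H)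
    (ρ : H →ₗ[k] A ⊗[k] H) (γ : H →ₗ[k] H ⊗[k] A)
    (P : A →ₗ[k] H ⊗[k] H) (Q : H →ₗ[k] A ⊗[k] A)
    -- (CC3) a₍<1>₎⊗Δ_H(a₍<2>₎) + a₍₋₁₎⊗P(a₍₀₎) = Δ_H(a₍<1>₎)⊗a₍<2>₎ + P(a₍₀₎)⊗a₍₁₎
    (hCC3 : ∀ a : A,
      (LinearMap.lTensor H dH) (P a) + (LinearMap.lTensor H P) (φ a)
        = (TensorProduct.assoc k H H H)
            ((LinearMap.rTensor H dH) (P a)) +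
          (TensorProduct.assoc k H H H) ((LinearMap.rTensor H P) (ψ a)))
    -- (CC4) x₍{1}₎⊗Δ_A(x₍{2}₎) + x₍[-1]₎⊗Q(x₍[0]₎) = Δ_A(x₍{1}₎)⊗x₍{2}₎ + Q(x₍[0]₎)⊗x₍[1]₎
    (hCC4 : ∀ x : H,
      (LinearMap.lTensor A dA) (Q x) + (LinearMap.lTensor A Q) (ρ x)
        = (TensorProduct.assoc k A A A)
            ((LinearMap.rTensor A dA) (Q x) + (LinearMap.rTensor A Q) (γ x)))
    -- (CC7) x₁⊗Δ_H(x₂) + x₍[0]₎⊗P(x₍[1]₎) = Δ_H(x₁)⊗x₂ + P(x₍[-1]₎)⊗x₍[0]₎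
    (hCC7 : ∀ x : H,
      (LinearMap.lTensor H dH) (dH x) + (LinearMap.lTensor H P) (γ x)
        = (TensorProduct.assoc k H H H)
            ((LinearMap.rTensor H dH) (dH x) + (LinearMap.rTensor H P) (ρ x)))
    -- (CC8) a₁⊗Δ_A(a₂) + a₍₀₎⊗Q(a₍₁₎) = Δ_A(a₁)⊗a₂ + Q(a₍₋₁₎)⊗a₍₀₎
    (hCC8 : ∀ a : A,
      (LinearMap.lTensor A dA) (dA a) + (LinearMap.lTensor A Q) (ψ a)
        = (TensorProduct.assoc k A A A)
            ((LinearMap.rTensor A dA) (dA a) + (LinearMap.rTensor A Q) (φ a)))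
    -- (CCP1) a₍₋₁₎⊗Δ_A(a₍₀₎) + a₍<1>₎⊗Q(a₍<2>₎) = φ(a₁)⊗a₂ + γ(a₍₋₁₎)⊗a₍₀₎
    (hCCP1 : ∀ a : A,
      (LinearMap.lTensor H dA) (φ a) + (LinearMap.lTensor H Q) (P a)
        = (TensorProduct.assoc k H A A)
            ((LinearMap.rTensor A φ) (dA a) + (LinearMap.rTensor A γ) (φ a)))
    -- (CCP2) Δ_A(a₍₀₎)⊗a₍₁₎ + Q(a₍<1>₎)⊗a₍<2>₎ = a₁⊗ψ(a₂) + a₍₀₎⊗ρ(a₍₁₎)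
    (hCCP2 : ∀ a : A,
      (TensorProduct.assoc k A A H)
          ((LinearMap.rTensor H dA) (ψ a) + (LinearMap.rTensor H Q) (P a))
        = (LinearMap.lTensor A ψ) (dA a) + (LinearMap.lTensor A ρ) (ψ a))
    -- (CCP3) x₍[-1]₎⊗Δ_H(x₍[0]₎) + x₍{1}₎⊗P(x₍{2}₎) = ρ(x₁)⊗x₂ + ψ(x₍[-1]₎)⊗x₍[0]₎
    (hCCP3 : ∀ x : H,
      (LinearMap.lTensor A dH) (ρ x) + (LinearMap.lTensor A P) (Q x)
        = (TensorProduct.assoc k A H H)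
            ((LinearMap.rTensor H ρ) (dH x) + (LinearMap.rTensor H ψ) (ρ x)))
    -- (CCP4) Δ_H(x₍[0]₎)⊗x₍[1]₎ + P(x₍{1}₎)⊗x₍{2}₎ = x₍[0]₎⊗φ(x₍[1]₎) + x₁⊗γ(x₂)
    (hCCP4 : ∀ x : H,
      (TensorProduct.assoc k H H A)
          ((LinearMap.rTensor A dH) (γ x) + (LinearMap.rTensor A P) (Q x))
        = (LinearMap.lTensor H φ) (γ x) + (LinearMap.lTensor H γ) (dH x))
    -- (CCP5) a₁⊗φ(a₂) + a₍₀₎⊗γ(a₍₁₎) = ψ(a₁)⊗a₂ + ρ(a₍₋₁₎)⊗a₍₀₎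
    (hCCP5 : ∀ a : A,
      (LinearMap.lTensor A φ) (dA a) + (LinearMap.lTensor A γ) (ψ a)
        = (TensorProduct.assoc k A H A)
            ((LinearMap.rTensor A ψ) (dA a) + (LinearMap.rTensor A ρ) (φ a)))
    -- (CCP6) x₁⊗ρ(x₂) + x₍[0]₎⊗ψ(x₍[1]₎) = φ(x₍[-1]₎)⊗x₍[0]₎ + γ(x₁)⊗x₂
    (hCCP6 : ∀ x : H,
      (LinearMap.lTensor H ρ) (dH x) + (LinearMap.lTensor H ψ) (γ x)
        = (TensorProduct.assoc k H A H)
            ((LinearMap.rTensor H φ) (ρ x) + (LinearMap.rTensor H γ) (dH x)))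
    -- (CCP7) a₍₋₁₎⊗φ(a₍₀₎) + a₍<1>₎⊗γ(a₍<2>₎) = Δ_H(a₍₋₁₎)⊗a₍₀₎ + P(a₁)⊗a₂
    (hCCP7 : ∀ a : A,
      (LinearMap.lTensor H φ) (φ a) + (LinearMap.lTensor H γ) (P a)
        = (TensorProduct.assoc k H H A)
            ((LinearMap.rTensor A dH) (φ a) + (LinearMap.rTensor A P) (dA a)))
    -- (CCP8) a₍₀₎⊗Δ_H(a₍₁₎) + a₁⊗P(a₂) = ψ(a₍₀₎)⊗a₍₁₎ + ρ(a₍<1>₎)⊗a₍<2>₎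
    (hCCP8 : ∀ a : A,
      (LinearMap.lTensor A dH) (ψ a) + (LinearMap.lTensor A P) (dA a)
        = (TensorProduct.assoc k A H H)
            ((LinearMap.rTensor H ψ) (ψ a) + (LinearMap.rTensor H ρ) (P a)))
    -- (CCP9) a₍₋₁₎⊗ψ(a₍₀₎) + a₍<1>₎⊗ρ(a₍<2>₎) = φ(a₍₀₎)⊗a₍₁₎ + γ(a₍<1>₎)⊗a₍<2>₎
    (hCCP9 : ∀ a : A,
      (LinearMap.lTensor H ψ) (φ a) + (LinearMap.lTensor H ρ) (P a)
        = (TensorProduct.assoc k H A H)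
            ((LinearMap.rTensor H φ) (ψ a) + (LinearMap.rTensor H γ) (P a)))
    -- (CCP10) x₍[-1]₎⊗ρ(x₍[0]₎) + x₍{1}₎⊗ψ(x₍{2}₎) = Δ_A(x₍[-1]₎)⊗x₍[0]₎ + Q(x₁)⊗x₂
    (hCCP10 : ∀ x : H,
      (LinearMap.lTensor A ρ) (ρ x) + (LinearMap.lTensor A ψ) (Q x)
        = (TensorProduct.assoc k A A H)
            ((LinearMap.rTensor H dA) (ρ x) + (LinearMap.rTensor H Q) (dH x)))
    -- (CCP11) x₍[0]₎⊗Δ_A(x₍[1]₎) + x₁⊗Q(x₂) = γ(x₍[0]₎)⊗x₍[1]₎ + φ(x₍{1}₎)⊗x₍{2}₎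
    (hCCP11 : ∀ x : H,
      (LinearMap.lTensor H dA) (γ x) + (LinearMap.lTensor H Q) (dH x)
        = (TensorProduct.assoc k H A A)
            ((LinearMap.rTensor A γ) (γ x) + (LinearMap.rTensor A φ) (Q x)))
    -- (CCP12) x₍[-1]₎⊗γ(x₍[0]₎) + x₍{1}₎⊗φ(x₍{2}₎) = ρ(x₍[0]₎)⊗x₍[1]₎ + ψ(x₍{1}₎)⊗x₍{2}₎
    (hCCP12 : ∀ x : H,
      (LinearMap.lTensor A γ) (ρ x) + (LinearMap.lTensor A φ) (Q x)
        = (TensorProduct.assoc k A H A)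
            ((LinearMap.rTensor A ρ) (γ x) + (LinearMap.rTensor A ψ) (Q x))) :
    ∀ e : A × H,
      (TensorProduct.assoc k (A × H) (A × H) (A × H))
          ((LinearMap.rTensor (A × H) (cycleCrossComul dA dH φ ψ ρ γ P Q))
            (cycleCrossComul dA dH φ ψ ρ γ P Q e))
        = (LinearMap.lTensor (A × H) (cycleCrossComul dA dH φ ψ ρ γ P Q))
            (cycleCrossComul dA dH φ ψ ρ γ P Q e) := by
  haveI : IsRightCancelAdd ((A × H) ⊗[k] (A × H) ⊗[k] (A × H)) := rcancelAux (G := (A × H) ⊗[k] (A × H) ⊗[k] (A × H))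
  set Δ := cycleCrossComul dA dH φ ψ ρ γ P Q with hΔdef
  set i1 := LinearMap.inl k A H with hi1
  set i2 := LinearMap.inr k A H with hi2
  have hΔ1 : Δ ∘ₗ i1 = TensorProduct.map i1 i1 ∘ₗ dA + TensorProduct.map i2 i1 ∘ₗ φ
      + TensorProduct.map i1 i2 ∘ₗ ψ + TensorProduct.map i2 i2 ∘ₗ P := by
    ext a
    simp [hΔdef, cycleCrossComul, hi1, hi2]
  have hΔ2 : Δ ∘ₗ i2 = TensorProduct.map i2 i2 ∘ₗ dH + TensorProduct.map i1 i2 ∘ₗ ρ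
      + TensorProduct.map i2 i1 ∘ₗ γ + TensorProduct.map i1 i1 ∘ₗ Q := by
    ext x
    simp [hΔdef, cycleCrossComul, hi1, hi2]
  have caseA : ∀ a : A,
      (TensorProduct.assoc k (A × H) (A × H) (A × H))
        ((LinearMap.rTensor (A × H) Δ) (Δ (i1 a)))
      = (LinearMap.lTensor (A × H) Δ) (Δ (i1 a)) := by
    intro a
    have hda : Δ (i1 a) = TensorProduct.map i1 i1 (dA a) + TensorProduct.map i2 i1 (φ a)
        + TensorProduct.map i1 i2 (ψ a) + TensorProduct.map i2 i2 (P a) := by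
      simp [hΔdef, cycleCrossComul, hi1, hi2]
    rw [hda]
    simp only [map_add, rT_map, lT_map, hΔ1, hΔ2,
      TensorProduct.map_add_left, TensorProduct.map_add_right, LinearMap.add_apply,
      mp_left, mp_right, map_add, assoc_nat]
    have e1 := congrArg (fun t => TensorProduct.map i1 (TensorProduct.map i1 i1) t) (hCC8 a).symm
    have e2 := congrArg (fun t => TensorProduct.map i2 (TensorProduct.map i1 i1) t) (hCCP1 a).symm
    have e3 := congrArg (fun t => TensorProduct.map i1 (TensorProduct.map i2 i1) t) (hCCP5 a).symm
    have e4 := congrArg (fun t => TensorProduct.map i2 (TensorProduct.map i2 i1) t) (hCCP7 a).symm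
    have e5 := congrArg (fun t => TensorProduct.map i1 (TensorProduct.map i1 i2) t) (hCCP2 a)
    have e6 := congrArg (fun t => TensorProduct.map i2 (TensorProduct.map i1 i2) t) (hCCP9 a).symm
    have e7 := congrArg (fun t => TensorProduct.map i1 (TensorProduct.map i2 i2) t) (hCCP8 a).symm
    have e8 := congrArg (fun t => TensorProduct.map i2 (TensorProduct.map i2 i2) t) (hCC3 a).symm
    simp only [map_add] at e1 e2 e3 e4 e5 e6 e7 e8
    linear_combination (norm := abel) e1 + e2 + e3 + e4 + e5 + e6 + e7 + e8
  have caseH : ∀ x : H,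
      (TensorProduct.assoc k (A × H) (A × H) (A × H))
        ((LinearMap.rTensor (A × H) Δ) (Δ (i2 x)))
      = (LinearMap.lTensor (A × H) Δ) (Δ (i2 x)) := by
    intro x
    have hdx : Δ (i2 x) = TensorProduct.map i2 i2 (dH x) + TensorProduct.map i1 i2 (ρ x)
        + TensorProduct.map i2 i1 (γ x) + TensorProduct.map i1 i1 (Q x) := by
      simp [hΔdef, cycleCrossComul, hi1, hi2]
    rw [hdx]
    simp only [map_add, rT_map, lT_map, hΔ1, hΔ2,
      TensorProduct.map_add_left, TensorProduct.map_add_right, LinearMap.add_apply,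
      mp_left, mp_right, map_add, assoc_nat]
    have e1 := congrArg (fun t => TensorProduct.map i1 (TensorProduct.map i1 i1) t) (hCC4 x).symm
    have e2 := congrArg (fun t => TensorProduct.map i2 (TensorProduct.map i1 i1) t) (hCCP11 x).symm
    have e3 := congrArg (fun t => TensorProduct.map i1 (TensorProduct.map i2 i1) t) (hCCP12 x).symm
    have e4 := congrArg (fun t => TensorProduct.map i2 (TensorProduct.map i2 i1) t) (hCCP4 x)
    have e5 := congrArg (fun t => TensorProduct.map i1 (TensorProduct.map i1 i2) t) (hCCP10 x).symm
    have e6 := congrArg (fun t => TensorProduct.map i2 (TensorProduct.map i1 i2) t) (hCCP6 x).symm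
    have e7 := congrArg (fun t => TensorProduct.map i1 (TensorProduct.map i2 i2) t) (hCCP3 x).symm
    have e8 := congrArg (fun t => TensorProduct.map i2 (TensorProduct.map i2 i2) t) (hCC7 x).symm
    simp only [map_add] at e1 e2 e3 e4 e5 e6 e7 e8
    linear_combination (norm := abel) e1 + e2 + e3 + e4 + e5 + e6 + e7 + e8
  rintro ⟨a, x⟩
  have hsplit : ((a, x) : A × H) = i1 a + i2 x := by simp [hi1, hi2]
  rw [hsplit]
  simp only [map_add, caseA a, caseH x]
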